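/- For every real t ≥ 0, the operator norm of exp(tA) is at most 1; i.e., the semigroup generated by the phase-space matrix A of the damped system is contractive. -/

import Mathlib

open Matrix
open scoped ComplexOrder

noncomputable section

/-- The value `x* P x` (which is real for Hermitian `P`), taken as its real part. -/
def qf {n : ℕ} (P : Matrix (Fin n) (Fin n) ℂ) (x : Fin n → ℂ) : ℝ :=
  (star x ⬝ᵥ P.mulVec x).re

/-- The (positive semidefinite) square root of a positive semidefinite matrix,
extended by `0` to all matrices. -/
def msqrt {n : ℕ} (P : Matrix (Fin n) (Fin n) ℂ) : Matrix (Fin n) (Fin n) ℂ :=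
  open scoped Classical in
  if h : P.PosSemidef then
    (h.1.eigenvectorUnitary.1 * diagonal (((↑) : ℝ → ℂ) ∘ Real.sqrt ∘ h.1.eigenvalues) *
      (star h.1.eigenvectorUnitary : Matrix (Fin n) (Fin n) ℂ)) else 0

/-- The phase-space matrix `A = [[0, K½ M⁻½], [−M⁻½ K½, −M⁻½ C M⁻½]]`. -/
def phaseA {n : ℕ} (M C K : Matrix (Fin n) (Fin n) ℂ) :
    Matrix (Fin n ⊕ Fin n) (Fin n ⊕ Fin n) ℂ :=
  fromBlocks 0 (msqrt K * (msqrt M)⁻¹)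
    (-((msqrt M)⁻¹ * msqrt K)) (-((msqrt M)⁻¹ * C * (msqrt M)⁻¹))

/-- The operator norm of a matrix with respect to the Euclidean norm. -/
def opNorm {m : Type*} [Fintype m] [DecidableEq m] (A : Matrix m m ℂ) : ℝ :=
  ‖toEuclideanCLM (𝕜 := ℂ) A‖

/-- Contraction property for dissipative generators on a complex inner product space. -/
theorem contraction_aux {E : Type*} [NormedAddCommGroup E] [InnerProductSpace ℂ E]
    [CompleteSpace E] (L : E →L[ℂ] E)
    (hdis : ∀ z : E, (inner ℂ (L z) z : ℂ).re ≤ 0)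
    {t : ℝ} (ht : 0 ≤ t) (x : E) :
    ‖NormedSpace.exp (t • L) x‖ ≤ ‖x‖ := by
  letI : InnerProductSpace ℝ E := InnerProductSpace.rclikeToReal ℂ E
  set y : ℝ → E := fun s => NormedSpace.exp (s • L) x with hy
  have hyderiv : ∀ s : ℝ, HasDerivAt y (L (y s)) s := by
    intro s
    have h1 : HasDerivAt (fun u : ℝ => NormedSpace.exp (u • L))
        (L * NormedSpace.exp (s • L)) s := by
      have h := hasDerivAt_exp_smul_const' (𝕂 := ℝ) (𝔸 := E →L[ℂ] E) L s
      exact h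
    have h2 := (((ContinuousLinearMap.apply ℂ E x).restrictScalars
        ℝ).hasFDerivAt.comp_hasDerivAt s h1)
    exact h2
  have hinner : ∀ s : ℝ,
      HasDerivAt (fun s => (inner ℝ (y s) (y s) : ℝ))
        ((inner ℝ (y s) (L (y s)) : ℝ) + (inner ℝ (L (y s)) (y s) : ℝ)) s :=
    fun s => (hyderiv s).inner ℝ (hyderiv s)
  have hder_nonpos : ∀ s : ℝ,
      (inner ℝ (y s) (L (y s)) : ℝ) + (inner ℝ (L (y s)) (y s) : ℝ) ≤ 0 := by
    intro s
    have h1 : (inner ℝ (L (y s)) (y s) : ℝ) = (inner ℂ (L (y s)) (y s) : ℂ).re :=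
      real_inner_eq_re_inner (𝕜 := ℂ) _ _
    have h2 : (inner ℝ (y s) (L (y s)) : ℝ) = (inner ℂ (y s) (L (y s)) : ℂ).re :=
      real_inner_eq_re_inner (𝕜 := ℂ) _ _
    have h3 : (inner ℂ (y s) (L (y s)) : ℂ).re = (inner ℂ (L (y s)) (y s) : ℂ).re := by
      simpa using inner_re_symm (𝕜 := ℂ) (y s) (L (y s))
    have h4 := hdis (y s)
    rw [h1, h2, h3]
    linarith
  have hanti : Antitone (fun s => (inner ℝ (y s) (y s) : ℝ)) := by
    apply antitone_of_deriv_nonpos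
    · intro s; exact (hinner s).differentiableAt
    · intro s; rw [(hinner s).deriv]; exact hder_nonpos s
  have hle : (inner ℝ (y t) (y t) : ℝ) ≤ (inner ℝ (y 0) (y 0) : ℝ) := hanti ht
  have hy0 : y 0 = x := by
    simp [hy, NormedSpace.exp_zero]
  rw [hy0] at hle
  rw [real_inner_self_eq_norm_sq, real_inner_self_eq_norm_sq] at hle
  have := Real.sqrt_le_sqrt hle
  rwa [Real.sqrt_sq (norm_nonneg _), Real.sqrt_sq (norm_nonneg _)] at this

/-- The phase-space matrix has nonpositive real quadratic form. -/
theorem phase_dissip {n : ℕ} (M C K : Matrix (Fin n) (Fin n) ℂ)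
    (hM : M.PosDef) (hC : C.PosDef) (hK : K.PosDef)
    (z : (Fin n ⊕ Fin n) → ℂ) :
    ((star z) ⬝ᵥ (phaseA M C K) *ᵥ z).re ≤ 0 := by
  set W := (msqrt M)⁻¹ with hW
  set B := msqrt K * W with hB
  set D := W * C * W with hD
  have hMs : (msqrt M).IsHermitian := by
    rw [msqrt, dif_pos hM.posSemidef]
    exact isHermitian_mul_mul_conjTranspose _
      (isHermitian_diagonal_of_self_adjoint _ (by unfold IsSelfAdjoint; funext i; simp))
  have hKs : (msqrt K).IsHermitian := by
    rw [msqrt, dif_pos hK.posSemidef]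
    exact isHermitian_mul_mul_conjTranspose _
      (isHermitian_diagonal_of_self_adjoint _ (by unfold IsSelfAdjoint; funext i; simp))
  have hWh : W.IsHermitian := hMs.inv
  have hBH : Bᴴ = W * msqrt K := by
    rw [hB, conjTranspose_mul, hWh.eq, hKs.eq]
  have hDpsd : D.PosSemidef := by
    have h := hC.posSemidef.conjTranspose_mul_mul_same W
    rwa [hWh.eq] at h
  have hA : phaseA M C K = fromBlocks 0 B (-(Bᴴ)) (-D) := by
    rw [phaseA, hBH, hB, hD, hW]
  set u := z ∘ Sum.inl with hu
  set v := z ∘ Sum.inr with hv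
  have hz : z = Sum.elim u v := by funext i; cases i <;> rfl
  have hstar : star z = Sum.elim (star u) (star v) := by
    funext i; cases i <;> rfl
  rw [hA, hstar, hz, fromBlocks_mulVec, sumElim_dotProduct_sumElim]
  have key : star v ⬝ᵥ Bᴴ *ᵥ u = star (star u ⬝ᵥ B *ᵥ v) := by
    rw [star_dotProduct, star_mulVec, conjTranspose_conjTranspose, ← dotProduct_mulVec]
  have h3 := hDpsd.re_dotProduct_nonneg v
  have expand : (star u ⬝ᵥ (0 *ᵥ u + B *ᵥ v) + star v ⬝ᵥ ((-(Bᴴ)) *ᵥ u + (-D) *ᵥ v)).re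
      = (star u ⬝ᵥ B *ᵥ v).re - (star v ⬝ᵥ Bᴴ *ᵥ u).re - (star v ⬝ᵥ D *ᵥ v).re := by
    simp [Matrix.neg_mulVec, dotProduct_add, dotProduct_neg]
    ring
  simp only [Sum.elim_comp_inl, Sum.elim_comp_inr]
  rw [expand, key]
  have : (star (star u ⬝ᵥ B *ᵥ v)).re = (star u ⬝ᵥ B *ᵥ v).re := by
    simp [Complex.star_def]
  rw [this]
  simpa using h3

/-- The semigroup generated by the phase-space matrix `A` is contractive:
`‖exp (t A)‖ ≤ 1` for all `t ≥ 0`. -/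
theorem contractive_semigroup {n : ℕ} (hn : 1 ≤ n)
    (M C K : Matrix (Fin n) (Fin n) ℂ)
    (hM : M.PosDef) (hC : C.PosDef) (hK : K.PosDef) :
    ∀ t : ℝ, 0 ≤ t →
      opNorm (NormedSpace.exp ((t : ℂ) • phaseA M C K)) ≤ 1 := by
  intro t ht
  set A := phaseA M C K with hA
  set L := toEuclideanCLM (𝕜 := ℂ) A with hL
  have hmap : toEuclideanCLM (𝕜 := ℂ) (NormedSpace.exp ((t : ℂ) • A))
      = NormedSpace.exp (t • L) := by
    let e0 : Matrix (Fin n ⊕ Fin n) (Fin n ⊕ Fin n) ℂ ≃ₗ[ℂ]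
        (EuclideanSpace ℂ (Fin n ⊕ Fin n) →L[ℂ] EuclideanSpace ℂ (Fin n ⊕ Fin n)) :=
      Matrix.toEuclideanLin.trans LinearMap.toContinuousLinearMap
    let e := e0.toContinuousLinearEquiv
    have hfe : ∀ X : Matrix (Fin n ⊕ Fin n) (Fin n ⊕ Fin n) ℂ,
        e X = toEuclideanCLM (𝕜 := ℂ) X := by
      intro X
      refine ContinuousLinearMap.coe_injective ?_
      rw [coe_toEuclideanCLM_eq_toEuclideanLin]
      rfl
    have h1 : t • L = (t : ℂ) • L := (Complex.coe_smul t L).symm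
    rw [h1, hL, ← map_smul (toEuclideanCLM (𝕜 := ℂ)) (t : ℂ) A]
    set Y := (t : ℂ) • A with hY
    simp only [NormedSpace.exp_eq_tsum ℂ]
    rw [← hfe, e.map_tsum]
    refine tsum_congr fun k => ?_
    rw [_root_.map_smul, hfe, map_pow]
  have hdis : ∀ z : EuclideanSpace ℂ (Fin n ⊕ Fin n), (inner ℂ (L z) z : ℂ).re ≤ 0 := by
    intro z
    have h1 : (inner ℂ (L z) z : ℂ).re = (inner ℂ z (L z) : ℂ).re := by
      simpa using inner_re_symm (𝕜 := ℂ) (L z) z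
    rw [h1]
    have h2 : (inner ℂ z (L z) : ℂ)
        = star (WithLp.equiv _ _ z) ⬝ᵥ (A *ᵥ (WithLp.equiv _ _ z)) := by
      rw [EuclideanSpace.inner_eq_star_dotProduct, dotProduct_comm]
      congr 1
    rw [h2]
    exact phase_dissip M C K hM hC hK _
  rw [opNorm, hmap]
  refine ContinuousLinearMap.opNorm_le_bound _ zero_le_one (fun x => ?_)
  rw [one_mul]
  exact contraction_aux L hdis ht x

end
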